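/- For every real k > 4, ∫_0^π dθ/√((2cosθ + k)² − 4) = (2/k)·K(4/k). -/

import Mathlib

open Real MeasureTheory Filter

/-- Complete elliptic integral of the first kind. -/
noncomputable def ellK (z : ℝ) : ℝ :=
  ∫ x in (0:ℝ)..1, 1 / Real.sqrt ((1 - x ^ 2) * (1 - z ^ 2 * x ^ 2))

/-- Complete elliptic integral of the third kind. -/
noncomputable def ellPi (n z : ℝ) : ℝ :=
  ∫ x in (0:ℝ)..1, 1 / ((1 - n * x ^ 2) * Real.sqrt ((1 - x ^ 2) * (1 - z ^ 2 * x ^ 2)))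

/-- Mahler measure of `P_{1,k}(x,y) = x + 1/x + y + 1/y + k`. -/
noncomputable def mahlerP1 (k : ℝ) : ℝ :=
  ∫ θ in (0:ℝ)..1, ∫ φ in (0:ℝ)..1,
    Real.log (norm
      (Complex.exp (2 * Real.pi * Complex.I * θ) +
        (Complex.exp (2 * Real.pi * Complex.I * θ))⁻¹ +
       Complex.exp (2 * Real.pi * Complex.I * φ) +
        (Complex.exp (2 * Real.pi * Complex.I * φ))⁻¹ + (k : ℂ)))

/-- Mahler measure of `P̃_k(x,y) = √((k+4)/(k−4))·(x + 1/x) + y − 1/y − k/√(k−4)`. -/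
noncomputable def mahlerPt (k : ℝ) : ℝ :=
  ∫ θ in (0:ℝ)..1, ∫ φ in (0:ℝ)..1,
    Real.log (norm
      ((Real.sqrt ((k + 4) / (k - 4)) : ℂ) *
        (Complex.exp (2 * Real.pi * Complex.I * θ) +
          (Complex.exp (2 * Real.pi * Complex.I * θ))⁻¹) +
       Complex.exp (2 * Real.pi * Complex.I * φ) -
        (Complex.exp (2 * Real.pi * Complex.I * φ))⁻¹ -
       ((k / Real.sqrt (k - 4) : ℝ) : ℂ)))

/-- `B_k(e^{2πiθ}) = √((k+4)/(k−4))·2cos(2πθ) − k/√(k−4)`, real on the unit circle. -/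
noncomputable def Bt (k θ : ℝ) : ℝ :=
  Real.sqrt ((k + 4) / (k - 4)) * (2 * Real.cos (2 * Real.pi * θ)) - k / Real.sqrt (k - 4)

/-- `y₊(e^{2πiθ}) = (−B + √(B² + 4))/2`. -/
noncomputable def yPlus (k θ : ℝ) : ℝ := (-Bt k θ + Real.sqrt ((Bt k θ) ^ 2 + 4)) / 2

/-- `y₋(e^{2πiθ}) = (−B − √(B² + 4))/2`. -/
noncomputable def yMinus (k θ : ℝ) : ℝ := (-Bt k θ - Real.sqrt ((Bt k θ) ^ 2 + 4)) / 2

/-- Half-Mahler measure `m⁺(P̃_k) = ∫₀¹ log⁺|y₊(e^{2πiθ})| dθ`. -/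
noncomputable def mPlus (k : ℝ) : ℝ := ∫ θ in (0:ℝ)..1, max 0 (Real.log |yPlus k θ|)

/-- Half-Mahler measure `m⁻(P̃_k) = ∫₀¹ log⁺|y₋(e^{2πiθ})| dθ`. -/
noncomputable def mMinus (k : ℝ) : ℝ := ∫ θ in (0:ℝ)..1, max 0 (Real.log |yMinus k θ|)

/-! ### Auxiliary definitions and lemmas for the change of variables -/

/-- The integrand of `ellK (4/k)`. -/
noncomputable def gK (k x : ℝ) : ℝ := 1 / Real.sqrt ((1 - x ^ 2) * (1 - (4 / k) ^ 2 * x ^ 2))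

/-- The change of variables `x = √k · sin(θ/2) / √(k + 4 − 4 sin²(θ/2))`. -/
noncomputable def fS (k θ : ℝ) : ℝ :=
  Real.sqrt k * Real.sin (θ / 2) / Real.sqrt (k + 4 - 4 * Real.sin (θ / 2) ^ 2)

/-- The derivative of `fS k`. -/
noncomputable def fS' (k θ : ℝ) : ℝ :=
  Real.sqrt k * (k + 4) * Real.cos (θ / 2) / (2 * Real.sqrt (k + 4 - 4 * Real.sin (θ / 2) ^ 2) ^ 3)

lemma hD_pos {k : ℝ} (hk : 4 < k) (θ : ℝ) : 0 < k + 4 - 4 * Real.sin (θ / 2) ^ 2 := by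
  nlinarith [Real.sin_sq_le_one (θ / 2)]

lemma hA_pos {k : ℝ} (hk : 4 < k) (θ : ℝ) : 0 < k - 4 * Real.sin (θ / 2) ^ 2 := by
  nlinarith [Real.sin_sq_le_one (θ / 2)]

lemma fS_hasDeriv {k : ℝ} (hk : 4 < k) (θ : ℝ) : HasDerivAt (fS k) (fS' k θ) θ := by
  have hD := hD_pos hk θ
  have hs : HasDerivAt (fun t : ℝ => Real.sin (t / 2)) (Real.cos (θ / 2) * (1 / 2)) θ := by
    simpa [Function.comp_def] using
      (Real.hasDerivAt_sin (θ / 2)).comp θ ((hasDerivAt_id θ).div_const 2)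
  have hDd : HasDerivAt (fun t : ℝ => k + 4 - 4 * Real.sin (t / 2) ^ 2)
      (-(4 * ((2 : ℝ) * Real.sin (θ / 2) ^ 1 * (Real.cos (θ / 2) * (1 / 2))))) θ := by
    exact ((hs.pow 2).const_mul 4).const_sub (k + 4)
  have hsqrtD : HasDerivAt (fun t : ℝ => Real.sqrt (k + 4 - 4 * Real.sin (t / 2) ^ 2))
      ((-(4 * ((2 : ℝ) * Real.sin (θ / 2) ^ 1 * (Real.cos (θ / 2) * (1 / 2))))) /
        (2 * Real.sqrt (k + 4 - 4 * Real.sin (θ / 2) ^ 2))) θ := hDd.sqrt hD.ne'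
  have hnum : HasDerivAt (fun t : ℝ => Real.sqrt k * Real.sin (t / 2))
      (Real.sqrt k * (Real.cos (θ / 2) * (1 / 2))) θ := hs.const_mul _
  have hden_ne : Real.sqrt (k + 4 - 4 * Real.sin (θ / 2) ^ 2) ≠ 0 :=
    (Real.sqrt_pos.2 hD).ne'
  have h := hnum.div hsqrtD hden_ne
  refine h.congr_deriv ?_
  symm
  have hsd : Real.sqrt (k + 4 - 4 * Real.sin (θ / 2) ^ 2) ^ 2
      = k + 4 - 4 * Real.sin (θ / 2) ^ 2 := Real.sq_sqrt hD.le
  set sd := Real.sqrt (k + 4 - 4 * Real.sin (θ / 2) ^ 2) with hsdd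
  unfold fS'
  rw [← hsdd]
  field_simp
  linear_combination (-Real.cos (θ / 2)) * hsd

lemma key_identity {k : ℝ} (hk : 4 < k) {θ : ℝ} (h0 : 0 ≤ θ) (hπ : θ < Real.pi) :
    fS' k θ * gK k (fS k θ) = (k / 2) * (1 / Real.sqrt ((2 * Real.cos θ + k) ^ 2 - 4)) := by
  have hk0 : (0 : ℝ) < k := by linarith
  have hD := hD_pos hk θ
  have hA := hA_pos hk θ
  have hc : 0 < Real.cos (θ / 2) := by
    apply Real.cos_pos_of_mem_Ioo
    constructor
    · linarith [Real.pi_pos]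
    · linarith
  have pyth : Real.sin (θ / 2) ^ 2 + Real.cos (θ / 2) ^ 2 = 1 := Real.sin_sq_add_cos_sq _
  have hcosθ : Real.cos θ = 1 - 2 * Real.sin (θ / 2) ^ 2 := by
    have h2 : Real.cos (2 * (θ / 2)) = Real.cos (θ / 2) ^ 2 - Real.sin (θ / 2) ^ 2 :=
      Real.cos_two_mul' _
    have : (2 : ℝ) * (θ / 2) = θ := by ring
    rw [this] at h2
    linarith
  set s := Real.sin (θ / 2) with hsdef
  set c := Real.cos (θ / 2) with hcdef
  set A := k - 4 * s ^ 2 with hAdef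
  set D := k + 4 - 4 * s ^ 2 with hDdef
  have hstep : (2 * Real.cos θ + k) ^ 2 - 4 = A * D := by rw [hcosθ]; ring
  have hq2 : Real.sqrt k ^ 2 = k := Real.sq_sqrt hk0.le
  have hd2 : Real.sqrt D ^ 2 = D := Real.sq_sqrt hD.le
  have ha2 : Real.sqrt A ^ 2 = A := Real.sq_sqrt hA.le
  have hqpos : 0 < Real.sqrt k := Real.sqrt_pos.2 hk0
  have hdpos : 0 < Real.sqrt D := Real.sqrt_pos.2 hD
  have hapos : 0 < Real.sqrt A := Real.sqrt_pos.2 hA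
  have hx : fS k θ = Real.sqrt k * s / Real.sqrt D := rfl
  have hx2 : (fS k θ) ^ 2 = k * s ^ 2 / D := by
    rw [hx, div_pow, mul_pow, hq2, hd2]
  have hRHSsq : ((k + 4) * c * Real.sqrt A / (Real.sqrt k * D)) ^ 2
      = (k + 4) ^ 2 * c ^ 2 * A / (k * D ^ 2) := by
    rw [div_pow, mul_pow, mul_pow, mul_pow, ha2, hq2]
  have hP : (1 - (fS k θ) ^ 2) * (1 - (4 / k) ^ 2 * (fS k θ) ^ 2)
      = ((k + 4) * c * Real.sqrt A / (Real.sqrt k * D)) ^ 2 := by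
    rw [hx2, hRHSsq]
    have hc2 : c ^ 2 = 1 - s ^ 2 := by linarith
    rw [hc2]
    field_simp
    rw [hAdef, hDdef]
    ring
  have hpos : 0 < (k + 4) * c * Real.sqrt A / (Real.sqrt k * D) := by
    apply div_pos
    · apply mul_pos (mul_pos (by linarith) hc) hapos
    · exact mul_pos hqpos hD
  have hsqrtP : Real.sqrt ((1 - (fS k θ) ^ 2) * (1 - (4 / k) ^ 2 * (fS k θ) ^ 2))
      = (k + 4) * c * Real.sqrt A / (Real.sqrt k * D) := by
    rw [hP, Real.sqrt_sq hpos.le]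
  have hsplit : Real.sqrt (A * D) = Real.sqrt A * Real.sqrt D := Real.sqrt_mul hA.le D
  rw [gK, hsqrtP, hstep, hsplit]
  rw [show fS' k θ = Real.sqrt k * (k + 4) * c / (2 * Real.sqrt D ^ 3) from rfl]
  have h3 : Real.sqrt D ^ 3 = D * Real.sqrt D := by
    rw [pow_succ, hd2]
  rw [h3]
  field_simp
  linear_combination hq2

lemma fS_cont {k : ℝ} (hk : 4 < k) : Continuous (fS k) := by
  apply Continuous.div (by continuity) (Real.continuous_sqrt.comp (by continuity))
  intro θ
  exact (Real.sqrt_pos.2 (hD_pos hk θ)).ne'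

lemma fS'_cont {k : ℝ} (hk : 4 < k) : Continuous (fS' k) := by
  apply Continuous.div (by continuity)
  · exact (continuous_const.mul ((Real.continuous_sqrt.comp (by continuity)).pow 3))
  · intro θ
    have := Real.sqrt_pos.2 (hD_pos hk θ)
    positivity

lemma fS_zero (k : ℝ) : fS k 0 = 0 := by simp [fS]

lemma fS_pi {k : ℝ} (hk : 4 < k) : fS k Real.pi = 1 := by
  have hk0 : (0:ℝ) < k := by linarith
  rw [fS, Real.sin_pi_div_two]
  norm_num
  exact (Real.sqrt_pos.2 hk0).ne'

lemma fS_mem {k : ℝ} (hk : 4 < k) {θ : ℝ} (h0 : 0 ≤ θ) (hπ : θ < Real.pi) :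
    fS k θ ∈ Set.Ico (0:ℝ) 1 := by
  have hk0 : (0:ℝ) < k := by linarith
  have hD := hD_pos hk θ
  have hs : 0 ≤ Real.sin (θ / 2) :=
    Real.sin_nonneg_of_nonneg_of_le_pi (by linarith) (by linarith [Real.pi_pos])
  have hc : 0 < Real.cos (θ / 2) := by
    apply Real.cos_pos_of_mem_Ioo
    exact ⟨by linarith [Real.pi_pos], by linarith⟩
  have pyth := Real.sin_sq_add_cos_sq (θ / 2)
  have hs1 : Real.sin (θ / 2) ^ 2 < 1 := by nlinarith
  have hnn : 0 ≤ fS k θ := by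
    rw [fS]
    positivity
  refine ⟨hnn, ?_⟩
  have hx2 : (fS k θ) ^ 2 = k * Real.sin (θ / 2) ^ 2 / (k + 4 - 4 * Real.sin (θ / 2) ^ 2) := by
    rw [fS, div_pow, mul_pow, Real.sq_sqrt hk0.le, Real.sq_sqrt hD.le]
  have h2 : (fS k θ) ^ 2 < 1 := by
    rw [hx2, div_lt_one hD]
    nlinarith
  nlinarith

lemma gK_contOn {k : ℝ} (hk : 4 < k) : ContinuousOn (gK k) (Set.Ioo (-1 : ℝ) 1) := by
  have hk0 : (0:ℝ) < k := by linarith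
  intro x hx
  have hP : 0 < (1 - x ^ 2) * (1 - (4 / k) ^ 2 * x ^ 2) := by
    have hx2 : x ^ 2 < 1 := by nlinarith [hx.1, hx.2]
    have hz : (4 / k) ^ 2 < 1 := by
      rw [div_pow]
      rw [div_lt_one (by positivity)]
      nlinarith
    have f2 : (4 / k) ^ 2 * x ^ 2 < 1 := by
      nlinarith [sq_nonneg x, sq_nonneg (4/k), hz, hx2]
    exact mul_pos (by linarith) (by linarith)
  apply ContinuousAt.continuousWithinAt
  apply ContinuousAt.div continuousAt_const
  · exact (Real.continuous_sqrt.continuousAt).comp (by fun_prop)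
  · exact (Real.sqrt_pos.2 hP).ne'

lemma gK_intervalIntegrable {k : ℝ} (hk : 4 < k) : IntervalIntegrable (gK k) volume 0 1 := by
  have hk0 : (0:ℝ) < k := by linarith
  have hz : (4 / k) ^ 2 < 1 := by
    rw [div_pow, div_lt_one (by positivity)]; nlinarith
  set m : ℝ := 1 - (4 / k) ^ 2 with hm
  have hm0 : 0 < m := by rw [hm]; linarith
  have hB : IntervalIntegrable (fun x : ℝ => (1 - x) ^ (-(1/2) : ℝ)) volume 0 1 := by
    have h1 : IntervalIntegrable (fun x : ℝ => x ^ (-(1/2) : ℝ)) volume 0 1 :=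
      intervalIntegral.intervalIntegrable_rpow' (by norm_num)
    simpa using (h1.comp_sub_left 1).symm
  have hBC : IntervalIntegrable (fun x : ℝ => (1 / Real.sqrt m) * (1 - x) ^ (-(1/2) : ℝ))
      volume 0 1 := hB.const_mul _
  apply hBC.mono_fun'
  · apply Measurable.aestronglyMeasurable
    have : gK k = fun x => (Real.sqrt ((1 - x ^ 2) * (1 - (4 / k) ^ 2 * x ^ 2)))⁻¹ := by
      funext x; rw [gK, one_div]
    rw [this]
    exact (Real.continuous_sqrt.comp (by continuity)).measurable.inv
  · rw [Filter.EventuallyLE, ae_restrict_iff' measurableSet_uIoc]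
    apply Filter.Eventually.of_forall
    intro x hx
    rw [Set.uIoc_of_le (by norm_num : (0:ℝ) ≤ 1)] at hx
    obtain ⟨hx0, hx1⟩ := hx
    have hgnn : 0 ≤ gK k x := by rw [gK]; positivity
    rw [Real.norm_of_nonneg hgnn]
    have hrw : (1 - x) ^ (-(1/2) : ℝ) = (Real.sqrt (1 - x))⁻¹ := by
      rw [Real.rpow_neg (by linarith), Real.sqrt_eq_rpow]
    rw [hrw, gK]
    rcases eq_or_lt_of_le hx1 with h1 | h1
    · subst h1
      norm_num
    · have hPge : (1 - x) * m ≤ (1 - x ^ 2) * (1 - (4 / k) ^ 2 * x ^ 2) := by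
        have h2 : 1 - x ≤ 1 - x ^ 2 := by nlinarith
        have h3 : m ≤ 1 - (4 / k) ^ 2 * x ^ 2 := by
          rw [hm]; nlinarith [sq_nonneg (4/k), sq_nonneg x]
        have h4 : (0:ℝ) ≤ 1 - x := by linarith
        nlinarith [hm0.le]
      have hden : 0 < Real.sqrt (1 - x) * Real.sqrt m :=
        mul_pos (Real.sqrt_pos.2 (by linarith)) (Real.sqrt_pos.2 hm0)
      have hle : Real.sqrt (1 - x) * Real.sqrt m
          ≤ Real.sqrt ((1 - x ^ 2) * (1 - (4 / k) ^ 2 * x ^ 2)) := by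
        rw [← Real.sqrt_mul (by linarith)]
        exact Real.sqrt_le_sqrt hPge
      calc 1 / Real.sqrt ((1 - x ^ 2) * (1 - (4 / k) ^ 2 * x ^ 2))
          ≤ 1 / (Real.sqrt (1 - x) * Real.sqrt m) := by
            apply one_div_le_one_div_of_le hden hle
        _ = 1 / Real.sqrt m * (Real.sqrt (1 - x))⁻¹ := by
            rw [one_div, mul_inv]; ring

/-- For every real `k > 4`, `∫₀^π dθ/√((2cosθ + k)² − 4) = (2/k)·K(4/k)`. -/
theorem integral_inv_sqrt_eq_ellK (k : ℝ) (hk : 4 < k) :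
    (∫ θ in (0:ℝ)..Real.pi, 1 / Real.sqrt ((2 * Real.cos θ + k) ^ 2 - 4)) =
      2 / k * ellK (4 / k) := by
  have hk0 : (0:ℝ) < k := by linarith
  set h : ℝ → ℝ := fun θ => 1 / Real.sqrt ((2 * Real.cos θ + k) ^ 2 - 4) with hh
  have hcont_h : Continuous h := by
    have hpos : ∀ θ : ℝ, 0 < (2 * Real.cos θ + k) ^ 2 - 4 := by
      intro θ
      nlinarith [Real.neg_one_le_cos θ, Real.cos_le_one θ]
    apply Continuous.div continuous_const
    · exact Real.continuous_sqrt.comp (by continuity)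
    · intro θ
      exact (Real.sqrt_pos.2 (hpos θ)).ne'
  have hint_on : IntegrableOn (gK k) (Set.uIcc (0:ℝ) 1) volume := by
    rw [Set.uIcc_of_le (by norm_num : (0:ℝ) ≤ 1)]
    exact (intervalIntegrable_iff_integrableOn_Icc_of_le (by norm_num)).mp
      (gK_intervalIntegrable hk)
  set G : ℝ → ℝ := fun y => ∫ x in (0:ℝ)..y, gK k x with hG
  have hGcont : ContinuousOn G (Set.uIcc (0:ℝ) 1) :=
    intervalIntegral.continuousOn_primitive_interval hint_on
  set F : ℝ → ℝ := fun b => ∫ θ in (0:ℝ)..b, h θ with hF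
  have hFcont : Continuous F :=
    intervalIntegral.continuous_primitive (fun a b => hcont_h.intervalIntegrable a b) 0
  have hchange : ∀ b ∈ Set.Ioo (0:ℝ) Real.pi, F b = 2 / k * G (fS k b) := by
    intro b hb
    have himg : ContinuousOn (gK k) (fS k '' Set.uIcc 0 b) := by
      apply (gK_contOn hk).mono
      rintro _ ⟨θ, hθ, rfl⟩
      rw [Set.uIcc_of_le hb.1.le] at hθ
      have hmem := fS_mem hk hθ.1 (lt_of_le_of_lt hθ.2 hb.2)
      exact ⟨by linarith [hmem.1], hmem.2⟩
    have hcv := intervalIntegral.integral_comp_smul_deriv'' (f := fS k) (f' := fS' k)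
      (g := gK k) (a := 0) (b := b) ((fS_cont hk).continuousOn)
      (fun x _ => (fS_hasDeriv hk x).hasDerivWithinAt)
      ((fS'_cont hk).continuousOn) himg
    rw [fS_zero] at hcv
    have hLHS : (∫ x in (0:ℝ)..b, fS' k x • (gK k ∘ fS k) x)
        = ∫ x in (0:ℝ)..b, (k / 2) * h x := by
      apply intervalIntegral.integral_congr
      intro θ hθ
      rw [Set.uIcc_of_le hb.1.le] at hθ
      have hkey := key_identity hk hθ.1 (lt_of_le_of_lt hθ.2 hb.2)
      simpa [smul_eq_mul, Function.comp, hh] using hkey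
    rw [hLHS, intervalIntegral.integral_const_mul] at hcv
    show (∫ θ in (0:ℝ)..b, h θ) = 2 / k * ∫ u in (0:ℝ)..fS k b, gK k u
    rw [← hcv]
    field_simp
  have hmem : Set.Ioo (0:ℝ) Real.pi ∈ nhdsWithin Real.pi (Set.Iio Real.pi) :=
    Ioo_mem_nhdsLT_of_mem ⟨Real.pi_pos, le_refl _⟩
  have hFten : Tendsto F (nhdsWithin Real.pi (Set.Iio Real.pi)) (nhds (F Real.pi)) :=
    (hFcont.tendsto _).mono_left nhdsWithin_le_nhds
  have hfS_t : Tendsto (fS k) (nhdsWithin Real.pi (Set.Iio Real.pi))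
      (nhdsWithin 1 (Set.uIcc (0:ℝ) 1)) := by
    apply tendsto_nhdsWithin_of_tendsto_nhds_of_eventually_within
    · have := ((fS_cont hk).tendsto Real.pi).mono_left
        (nhdsWithin_le_nhds (s := Set.Iio Real.pi))
      rwa [fS_pi hk] at this
    · filter_upwards [hmem] with θ hθ
      have hm2 := fS_mem hk hθ.1.le hθ.2
      rw [Set.uIcc_of_le (by norm_num : (0:ℝ) ≤ 1)]
      exact ⟨hm2.1, hm2.2.le⟩
  have hGten : Tendsto (fun b => G (fS k b)) (nhdsWithin Real.pi (Set.Iio Real.pi))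
      (nhds (G 1)) := by
    have h1mem : (1:ℝ) ∈ Set.uIcc (0:ℝ) 1 := by
      rw [Set.uIcc_of_le (by norm_num : (0:ℝ) ≤ 1)]
      exact ⟨by norm_num, le_refl _⟩
    exact ((hGcont 1 h1mem).tendsto).comp hfS_t
  have hF2 : Tendsto F (nhdsWithin Real.pi (Set.Iio Real.pi)) (nhds (2 / k * G 1)) := by
    apply Filter.Tendsto.congr' _ (hGten.const_mul (2 / k))
    filter_upwards [hmem] with b hb
    exact (hchange b hb).symm
  have hfinal : F Real.pi = 2 / k * G 1 := tendsto_nhds_unique hFten hF2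
  have hellK : ellK (4 / k) = G 1 := rfl
  calc (∫ θ in (0:ℝ)..Real.pi, 1 / Real.sqrt ((2 * Real.cos θ + k) ^ 2 - 4))
      = F Real.pi := rfl
    _ = 2 / k * G 1 := hfinal
    _ = 2 / k * ellK (4 / k) := by rw [hellK]
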